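/- Let n ∈ ℕ, let V : ℝ^n → ℝ be continuous and nonnegative, let R > 0 and set V̄ := sup_{‖z‖ ≤ R} V(z). Suppose V is Lipschitz with constant L_V > 0 on the closed ball of radius R + (2 V̄)^{1/2} centered at the origin. Let ε₁ > 0 and let α ∈ (0,1) satisfy L_V · (2 V̄)^{1/2} · α ≤ ε₁/2. Then for every x with ‖x‖ ≤ R one has V_α(x) ≤ V(x) ≤ V_α(x) + ε₁. -/

import Mathlib

open Metric

/-- Inf-convolution (Moreau–Yosida regularization) of `V` with parameter `α`. -/
noncomputable def infConv {n : ℕ} (V : EuclideanSpace ℝ (Fin n) → ℝ) (α : ℝ)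
    (x : EuclideanSpace ℝ (Fin n)) : ℝ :=
  ⨅ y : EuclideanSpace ℝ (Fin n), (V y + ‖y - x‖ ^ 2 / (2 * α ^ 2))

theorem stmt1 (n : ℕ) (V : EuclideanSpace ℝ (Fin n) → ℝ)
    (hVc : Continuous V) (hVnn : ∀ z, 0 ≤ V z)
    (R : ℝ) (hR : 0 < R)
    (Vbar : ℝ) (hVbar : Vbar = sSup (V '' closedBall (0 : EuclideanSpace ℝ (Fin n)) R))
    (L_V : ℝ) (hLV : 0 < L_V)
    (hLip : ∀ a ∈ closedBall (0 : EuclideanSpace ℝ (Fin n)) (R + Real.sqrt (2 * Vbar)),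
      ∀ b ∈ closedBall (0 : EuclideanSpace ℝ (Fin n)) (R + Real.sqrt (2 * Vbar)),
        |V a - V b| ≤ L_V * ‖a - b‖)
    (ε₁ α : ℝ) (hε₁ : 0 < ε₁) (hα : α ∈ Set.Ioo (0 : ℝ) 1)
    (hcond : L_V * Real.sqrt (2 * Vbar) * α ≤ ε₁ / 2) :
    ∀ x : EuclideanSpace ℝ (Fin n), ‖x‖ ≤ R →
      infConv V α x ≤ V x ∧ V x ≤ infConv V α x + ε₁ := by
  obtain ⟨hα0, hα1⟩ := hα
  intro x hx
  have hα2 : (0:ℝ) < 2 * α ^ 2 := by positivity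
  have hbdd : BddBelow (Set.range fun y : EuclideanSpace ℝ (Fin n) =>
      V y + ‖y - x‖ ^ 2 / (2 * α ^ 2)) := by
    refine ⟨0, ?_⟩
    rintro _ ⟨y, rfl⟩
    exact add_nonneg (hVnn y) (div_nonneg (sq_nonneg _) hα2.le)
  -- V x ≤ Vbar
  have hbddA : BddAbove (V '' closedBall (0 : EuclideanSpace ℝ (Fin n)) R) :=
    ((isCompact_closedBall _ _).image hVc).bddAbove
  have hxmem : x ∈ closedBall (0 : EuclideanSpace ℝ (Fin n)) R := by
    simpa [mem_closedBall, dist_eq_norm] using hx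
  have hVxle : V x ≤ Vbar := hVbar ▸ le_csSup hbddA ⟨x, hxmem, rfl⟩
  have hVbar0 : 0 ≤ Vbar := le_trans (hVnn x) hVxle
  have hs0 : 0 ≤ Real.sqrt (2 * Vbar) := Real.sqrt_nonneg _
  constructor
  · have := ciInf_le hbdd x
    simpa [infConv] using this
  · rw [← sub_le_iff_le_add]
    refine le_ciInf fun y => ?_
    have hq0 : 0 ≤ ‖y - x‖ ^ 2 / (2 * α ^ 2) :=
      div_nonneg (sq_nonneg _) hα2.le
    by_cases h : ‖y - x‖ ≤ α * Real.sqrt (2 * Vbar)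
    · -- Lipschitz case
      have hy : y ∈ closedBall (0 : EuclideanSpace ℝ (Fin n)) (R + Real.sqrt (2 * Vbar)) := by
        have : ‖y‖ ≤ ‖x‖ + ‖y - x‖ := by
          have := norm_add_le (y - x) x
          simpa [add_comm] using this
        have h2 : α * Real.sqrt (2 * Vbar) ≤ Real.sqrt (2 * Vbar) := by
          nlinarith
        simp only [mem_closedBall, dist_zero_right]
        linarith
      have hx' : x ∈ closedBall (0 : EuclideanSpace ℝ (Fin n)) (R + Real.sqrt (2 * Vbar)) := by
        simp only [mem_closedBall, dist_zero_right]
        linarith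
      have hl := hLip x hx' y hy
      have hxy : ‖x - y‖ = ‖y - x‖ := norm_sub_rev _ _
      have : V x - V y ≤ L_V * ‖y - x‖ := by
        have := le_abs_self (V x - V y)
        rw [hxy] at hl
        linarith
      have h3 : L_V * ‖y - x‖ ≤ ε₁ / 2 := by
        calc L_V * ‖y - x‖ ≤ L_V * (α * Real.sqrt (2 * Vbar)) := by nlinarith
          _ = L_V * Real.sqrt (2 * Vbar) * α := by ring
          _ ≤ ε₁ / 2 := hcond
      linarith
    · -- far case: quadratic term dominates
      push_neg at h
      have hsq : α ^ 2 * (2 * Vbar) ≤ ‖y - x‖ ^ 2 := by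
        have hs : Real.sqrt (2 * Vbar) ^ 2 = 2 * Vbar :=
          Real.sq_sqrt (by positivity)
        have h2 : (α * Real.sqrt (2 * Vbar)) ^ 2 ≤ ‖y - x‖ ^ 2 :=
          pow_le_pow_left₀ (by positivity) h.le 2
        nlinarith
      have hquad : Vbar ≤ ‖y - x‖ ^ 2 / (2 * α ^ 2) := by
        rw [le_div_iff₀ hα2]
        nlinarith
      have := hVnn y
      linarith
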